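/- Let H be a linear space of dimension ≥ 3 over a division ring K and let ⊥ be an orthogeometry relation on H. Then: (a) for any nonzero u, v ∈ H, if every nonzero w with w ⊥ u also satisfies w ⊥ v, then v is a scalar multiple of u (the induced orthoset on one-dimensional subspaces is point-closed); (b) for any nonzero u ∈ H, the set {v ∈ H : v = 0 or v ⊥ u} is a K-subspace of H which is maximal among proper subspaces of H (a hyperplane). -/
import Mathlib


theorem stmt_5 {K : Type*} [DivisionRing K] {H : Type*} [AddCommGroup H] [Module K H]
    (hdim : 3 ≤ Module.rank K H)
    (perp : H → H → Prop)
    (hsymm : ∀ u v : H, perp u v → perp v u)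
    (hirr : ∀ u : H, u ≠ 0 → ¬ perp u u)
    (og1 : ∀ w u v : H, perp w u → perp w v →
      ∀ x ∈ Submodule.span K ({u, v} : Set H), x ≠ 0 → perp w x)
    (og2 : ∀ u v : H, LinearIndependent K ![u, v] →
      ∃ w ∈ Submodule.span K ({u, v} : Set H), w ≠ 0 ∧ perp w u) :
    (∀ u v : H, u ≠ 0 → v ≠ 0 →
      (∀ w : H, w ≠ 0 → perp w u → perp w v) → ∃ α : K, v = α • u) ∧
    (∀ u : H, u ≠ 0 → ∃ S : Submodule K H,
      (S : Set H) = {v : H | v = 0 ∨ perp v u} ∧ IsCoatom S) := by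
  classical
  -- scaling: a nonzero multiple of a vector perpendicular to u is perpendicular to u
  have hscale : ∀ u w : H, perp w u → w ≠ 0 → ∀ a : K, a ≠ 0 → perp (a • w) u := by
    intro u w hw hw0 a ha
    have h1 : perp u w := hsymm _ _ hw
    have hmem : a • w ∈ Submodule.span K ({w, w} : Set H) := by
      rw [Submodule.mem_span_pair]
      exact ⟨a, 0, by simp⟩
    exact hsymm _ _ (og1 u w w h1 h1 (a • w) hmem (smul_ne_zero ha hw0))
  -- no nonzero multiple of u is perpendicular to u
  have hnomul : ∀ u : H, u ≠ 0 → ∀ a : K, a ≠ 0 → ¬ perp (a • u) u := by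
    intro u hu a ha hp
    have := hscale u (a • u) hp (smul_ne_zero ha hu) a⁻¹ (inv_ne_zero ha)
    rw [inv_smul_smul₀ ha] at this
    exact hirr u hu this
  have li2 : ∀ x v : H, LinearIndependent K ![x, v] ↔ v ≠ 0 ∧ ∀ a : K, a • v ≠ x := by
    intro x v
    rw [linearIndependent_fin2]
    simp
  -- Lemma A: the polar of u meets every plane
  have lemA : ∀ u x v : H, u ≠ 0 → LinearIndependent K ![x, v] →
      ∃ w ∈ Submodule.span K ({x, v} : Set H), w ≠ 0 ∧ perp w u := by
    intro u x v hu hli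
    obtain ⟨hv0, hvx⟩ := (li2 x v).1 hli
    have hx0 : x ≠ 0 := fun h => hvx 0 (by simp [h])
    have hxP : x ∈ Submodule.span K ({x, v} : Set H) :=
      Submodule.subset_span (Set.mem_insert _ _)
    have hvP : v ∈ Submodule.span K ({x, v} : Set H) :=
      Submodule.subset_span (Set.mem_insert_of_mem _ rfl)
    by_cases hux : ∃ a : K, u = a • x
    · -- u is a multiple of x; use OG2 on (u, v)
      obtain ⟨a, rfl⟩ := hux
      have ha : a ≠ 0 := by rintro rfl; simp at hu
      have hli2 : LinearIndependent K ![a • x, v] := by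
        rw [li2]
        refine ⟨hv0, fun c hc => ?_⟩
        exact hvx (a⁻¹ * c) (by rw [mul_smul, hc, inv_smul_smul₀ ha])
      obtain ⟨w, hwm, hw0, hwp⟩ := og2 (a • x) v hli2
      refine ⟨w, ?_, hw0, hwp⟩
      have hsub : Submodule.span K ({a • x, v} : Set H) ≤ Submodule.span K ({x, v} : Set H) := by
        rw [Submodule.span_le]
        rintro y (rfl | rfl)
        · exact Submodule.smul_mem _ a hxP
        · exact hvP
      exact hsub hwm
    · -- u not a multiple of x
      have hli1 : LinearIndependent K ![u, x] := by
        rw [li2]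
        exact ⟨hx0, fun a ha => hux ⟨a, ha.symm⟩⟩
      obtain ⟨w1, hw1m, hw10, hw1p⟩ := og2 u x hli1
      obtain ⟨a, b, hab⟩ := Submodule.mem_span_pair.1 hw1m
      by_cases ha : a = 0
      · refine ⟨w1, ?_, hw10, hw1p⟩
        rw [← hab, ha, zero_smul, zero_add]
        exact Submodule.smul_mem _ b hxP
      · by_cases huv : ∃ c : K, u = c • v
        · -- then w1 = a•u + b•x already lies in span {x, v}
          obtain ⟨c, rfl⟩ := huv
          refine ⟨w1, ?_, hw10, hw1p⟩
          rw [← hab]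
          exact add_mem (Submodule.smul_mem _ a (Submodule.smul_mem _ c hvP))
            (Submodule.smul_mem _ b hxP)
        · have hli3 : LinearIndependent K ![u, v] := by
            rw [li2]
            exact ⟨hv0, fun c hc => huv ⟨c, hc.symm⟩⟩
          obtain ⟨w2, hw2m, hw20, hw2p⟩ := og2 u v hli3
          obtain ⟨c, d, hcd⟩ := Submodule.mem_span_pair.1 hw2m
          by_cases hc : c = 0
          · refine ⟨w2, ?_, hw20, hw2p⟩
            rw [← hcd, hc, zero_smul, zero_add]
            exact Submodule.smul_mem _ d hvP
          · have hb : b ≠ 0 := by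
              rintro rfl
              rw [zero_smul, add_zero] at hab
              exact hnomul u hu a ha (hab ▸ hw1p)
            -- z = w1 - (a c⁻¹) • w2 = b•x - (a c⁻¹ d)•v
            set z := w1 - (a * c⁻¹) • w2 with hzdef
            have hz : z = b • x - (a * c⁻¹ * d) • v := by
              rw [hzdef, ← hab, ← hcd, smul_add, smul_smul, smul_smul,
                inv_mul_cancel_right₀ hc]
              abel
            have hz0 : z ≠ 0 := by
              rw [hz, sub_ne_zero]
              intro h
              exact hvx (b⁻¹ * (a * c⁻¹ * d))
                (by rw [mul_smul, ← h, inv_smul_smul₀ hb])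
            have hzm : z ∈ Submodule.span K ({x, v} : Set H) := by
              rw [hz]
              exact sub_mem (Submodule.smul_mem _ _ hxP) (Submodule.smul_mem _ _ hvP)
            have hzw : z ∈ Submodule.span K ({w1, w2} : Set H) := by
              rw [Submodule.mem_span_pair]
              exact ⟨1, -(a * c⁻¹), by rw [one_smul, neg_smul, hzdef]; abel⟩
            have : perp u z :=
              og1 u w1 w2 (hsymm _ _ hw1p) (hsymm _ _ hw2p) z hzw hz0
            exact ⟨z, hzm, hz0, hsymm _ _ this⟩
  constructor
  · -- part (a)
    intro u v hu hv hall
    by_contra hne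
    push_neg at hne
    have hli : LinearIndependent K ![u, v] := by
      rw [li2]
      refine ⟨hv, fun a ha => ?_⟩
      have ha0 : a ≠ 0 := by rintro rfl; simp at ha; exact hu ha.symm
      exact hne a⁻¹ (by rw [← ha, inv_smul_smul₀ ha0])
    obtain ⟨w, hwm, hw0, hwp⟩ := og2 u v hli
    have hwv : perp w v := hall w hw0 hwp
    exact hirr w hw0 (og1 w u v hwp hwv w hwm hw0)
  · -- part (b)
    intro u hu
    refine ⟨{ carrier := {v : H | v = 0 ∨ perp v u},
              zero_mem' := Or.inl rfl,
              add_mem' := ?_,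
              smul_mem' := ?_ }, rfl, ?_, ?_⟩
    · rintro a b (rfl | ha) hb
      · simpa using hb
      · rcases hb with rfl | hb
        · simpa using Or.inr ha
        · by_cases hab : a + b = 0
          · exact Or.inl hab
          · refine Or.inr (hsymm _ _ (og1 u a b (hsymm _ _ ha) (hsymm _ _ hb) (a + b) ?_ hab))
            rw [Submodule.mem_span_pair]
            exact ⟨1, 1, by simp⟩
    · rintro c v (rfl | hv)
      · exact Or.inl (smul_zero c)
      · by_cases hcv : c • v = 0
        · exact Or.inl hcv
        · have hc : c ≠ 0 := by rintro rfl; simp at hcv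
          have hv0 : v ≠ 0 := by rintro rfl; simp at hcv
          exact Or.inr (hscale u v hv hv0 c hc)
    · -- S ≠ ⊤
      intro h
      have : u ∈ ({v : H | v = 0 ∨ perp v u} : Set H) := by
        have := h ▸ Submodule.mem_top (R := K) (x := u)
        exact this
      rcases this with h0 | hp
      · exact hu h0
      · exact hirr u hu hp
    · -- maximality
      intro T hT
      obtain ⟨v, hvT, hvS⟩ := SetLike.exists_of_lt hT
      have hvS' : v ≠ 0 ∧ ¬ perp v u := by
        constructor
        · rintro rfl; exact hvS (Or.inl rfl)
        · intro h; exact hvS (Or.inr h)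
      obtain ⟨hv0, hvp⟩ := hvS'
      rw [eq_top_iff]
      intro x _
      by_cases hxS : x = 0 ∨ perp x u
      · exact hT.le hxS
      · push_neg at hxS
        obtain ⟨hx0, hxp⟩ := hxS
        by_cases hxv : ∃ a : K, x = a • v
        · obtain ⟨a, rfl⟩ := hxv
          exact Submodule.smul_mem _ a hvT
        · have hli : LinearIndependent K ![x, v] := by
            rw [li2]
            exact ⟨hv0, fun a ha => hxv ⟨a, ha.symm⟩⟩
          obtain ⟨w, hwm, hw0, hwp⟩ := lemA u x v hu hli
          obtain ⟨p, q, hpq⟩ := Submodule.mem_span_pair.1 hwm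
          have hwT : w ∈ T := hT.le (Or.inr hwp)
          by_cases hp : p = 0
          · exfalso
            rw [hp, zero_smul, zero_add] at hpq
            have hq : q ≠ 0 := by rintro rfl; rw [zero_smul] at hpq; exact hw0 hpq.symm
            have := hscale u (q • v) (hpq ▸ hwp) (hpq ▸ hw0) q⁻¹ (inv_ne_zero hq)
            rw [inv_smul_smul₀ hq] at this
            exact hvp this
          · have hx : x = p⁻¹ • (w - q • v) := by
              rw [← hpq]
              rw [add_sub_cancel_right, smul_smul, inv_mul_cancel₀ hp, one_smul]
            rw [hx]
            exact Submodule.smul_mem _ _ (sub_mem hwT (Submodule.smul_mem _ q hvT))
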